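/- Let (X₁,Y₁),…,(Xₙ,Yₙ) be i.i.d. pairs of square-integrable real random variables such that Xᵢ is independent of Yᵢ. Let X̄ = (1/n)∑ᵢXᵢ and Ȳ = (1/n)∑ᵢYᵢ denote the sample means. Then E[ ( ∑_{i=1}^n (Xᵢ - X̄)(Yᵢ - Ȳ) )² ] = (n-1)·Var(X₁)·Var(Y₁). -/

import Mathlib

open MeasureTheory ProbabilityTheory Finset

section Helpers
variable {Ω : Type*} [MeasurableSpace Ω] {μ : Measure Ω} [IsProbabilityMeasure μ]

lemma csum (n : ℕ) (hn : 0 < n) :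
    ∑ p : Fin n × Fin n, ((if p.1 = p.2 then (1:ℝ) else 0) - 1/n)^2 = (n:ℝ) - 1 := by
  have hn' : (n:ℝ) ≠ 0 := Nat.cast_ne_zero.2 hn.ne'
  rw [Fintype.sum_prod_type]
  have key : ∀ i : Fin n, ∑ j : Fin n, ((if i = j then (1:ℝ) else 0) - 1/(n:ℝ))^2
      = 1 - 2/(n:ℝ) + (n:ℝ) * (1/(n:ℝ)^2) := by
    intro i
    simp only [sub_sq, Finset.sum_add_distrib, Finset.sum_sub_distrib, ite_pow, one_pow,
      zero_pow, mul_ite, mul_one, mul_zero, ite_mul, zero_mul, Finset.sum_ite_eq,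
      Finset.mem_univ, if_true, Finset.sum_const, card_univ, Fintype.card_fin, nsmul_eq_mul]
    ring_nf
    field_simp
    simp
  rw [Finset.sum_congr rfl fun i _ => key i]
  simp only [Finset.sum_const, card_univ, Fintype.card_fin, nsmul_eq_mul]
  field_simp
  ring

lemma center_eq {n : ℕ} (x : Fin n → ℝ) (c : ℝ) (hn' : (n:ℝ) ≠ 0) (i : Fin n) :
    x i - (∑ j, x j)/n = (x i - c) - (∑ j, (x j - c))/n := by
  rw [Finset.sum_sub_distrib, Finset.sum_const, card_univ, Fintype.card_fin, nsmul_eq_mul]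
  field_simp
  ring

lemma expand_eq {n : ℕ} (a b : Fin n → ℝ) (hn' : (n:ℝ) ≠ 0) :
    ∑ i, (a i - (∑ j, a j)/n) * (b i - (∑ j, b j)/n)
      = ∑ p : Fin n × Fin n, (((if p.1 = p.2 then (1:ℝ) else 0) - 1/n) * (a p.1 * b p.2)) := by
  rw [Fintype.sum_prod_type]
  set Sa := ∑ j, a j with hSa
  set Sb := ∑ j, b j with hSb
  have lhs : ∑ i, (a i - Sa/n) * (b i - Sb/n)
      = ∑ i, a i * b i - Sa * Sb / n := by
    have : ∀ i : Fin n, (a i - Sa/n) * (b i - Sb/n)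
        = a i * b i - a i * (Sb/n) - (Sa/n) * b i + (Sa/n) * (Sb/n) := by intro i; ring
    rw [Finset.sum_congr rfl fun i _ => this i]
    rw [Finset.sum_add_distrib, Finset.sum_sub_distrib, Finset.sum_sub_distrib,
      ← Finset.sum_mul, ← Finset.mul_sum, Finset.sum_const, card_univ, Fintype.card_fin,
      nsmul_eq_mul, ← hSa, ← hSb]
    field_simp
    ring
  have rhs : ∀ i : Fin n, ∑ j, (((if i = j then (1:ℝ) else 0) - 1/n) * (a i * b j))
      = a i * b i - a i * Sb / n := by
    intro i
    have : ∀ j : Fin n, (((if i = j then (1:ℝ) else 0) - 1/n) * (a i * b j))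
        = (if i = j then a i * b j else 0) - (a i * b j)/n := by
      intro j; by_cases h : i = j <;> simp [h] <;> ring
    rw [Finset.sum_congr rfl fun j _ => this j, Finset.sum_sub_distrib,
      Finset.sum_ite_eq _ i (fun j => a i * b j), ← Finset.sum_div, ← Finset.mul_sum, ← hSb]
    simp
  rw [lhs, Finset.sum_congr rfl fun i _ => rhs i, Finset.sum_sub_distrib]
  congr 1
  rw [← Finset.sum_div, ← Finset.sum_mul, ← hSa]



lemma integral_finset_prod_of_iIndepFun {ι : Type*} [DecidableEq ι] {f : ι → Ω → ℝ}
    (hind : iIndepFun f μ) (hm : ∀ i, Measurable (f i))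
    (s : Finset ι) :
    ∫ ω, ∏ i ∈ s, f i ω ∂μ = ∏ i ∈ s, ∫ ω, f i ω ∂μ := by
  induction s using Finset.induction_on with
  | empty => simp
  | @insert i s hi ih =>
    have hIF : IndepFun (∏ j ∈ s, f j) (f i) μ :=
      hind.indepFun_finsetProd_of_notMem hm hi
    have hprodmeas : Measurable (∏ j ∈ s, f j) := by
      simpa [Finset.prod_fn] using Finset.measurable_prod s (fun j _ => hm j)
    have hmul := hIF.integral_mul_eq_mul_integral hprodmeas.aestronglyMeasurable (hm i).aestronglyMeasurable
    have heq : ∫ ω, ∏ j ∈ insert i s, f j ω ∂μ = integral μ ((∏ j ∈ s, f j) * f i) := by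
      apply integral_congr_ae; filter_upwards with ω
      simp [Finset.prod_insert hi, Finset.prod_apply, mul_comm]
    have h3 : integral μ (∏ j ∈ s, f j) = ∫ ω, ∏ j ∈ s, f j ω ∂μ := by
      apply integral_congr_ae; filter_upwards with ω; simp [Finset.prod_apply]
    rw [heq, hmul, h3, ih, Finset.prod_insert hi]
    ring

lemma integrable_finset_prod_of_iIndepFun {ι : Type*} [DecidableEq ι] {f : ι → Ω → ℝ}
    (hind : iIndepFun f μ) (hm : ∀ i, Measurable (f i))
    (hint : ∀ i, Integrable (f i) μ) (s : Finset ι) :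
    Integrable (fun ω => ∏ i ∈ s, f i ω) μ := by
  induction s using Finset.induction_on with
  | empty => simpa using integrable_const (1:ℝ)
  | @insert i s hi ih =>
    have hIF : IndepFun (∏ j ∈ s, f j) (f i) μ :=
      hind.indepFun_finsetProd_of_notMem hm hi
    have h2 : Integrable ((∏ j ∈ s, f j) * f i) μ := by
      apply hIF.integrable_mul _ (hint i)
      apply ih.congr; filter_upwards with ω; simp [Finset.prod_apply]
    apply h2.congr; filter_upwards with ω
    simp [Finset.prod_insert hi, Finset.prod_apply, mul_comm]

lemma key_moment {n : ℕ} {A B : Fin n → Ω → ℝ} {v w : ℝ}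
    (hmA : ∀ i, Measurable (A i)) (hmB : ∀ i, Measurable (B i))
    (hA2 : ∀ i, MemLp (A i) 2 μ) (hB2 : ∀ i, MemLp (B i) 2 μ)
    (hiidAB : iIndepFun (fun m ω => (A m ω, B m ω)) μ)
    (hAB : ∀ m, IndepFun (A m) (B m) μ)
    (hEA : ∀ i, ∫ ω, A i ω ∂μ = 0) (hEB : ∀ i, ∫ ω, B i ω ∂μ = 0)
    (hEA2 : ∀ i, ∫ ω, (A i ω)^2 ∂μ = v) (hEB2 : ∀ i, ∫ ω, (B i ω)^2 ∂μ = w)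
    (i j k l : Fin n) :
    Integrable (fun ω => A i ω * B j ω * (A k ω * B l ω)) μ ∧
    ∫ ω, A i ω * B j ω * (A k ω * B l ω) ∂μ
      = (if i = k then v else 0) * (if j = l then w else 0) := by
  classical
  set e : Fin n → Fin n → Fin n → ℕ :=
    fun i k m => (if m = i then 1 else 0) + (if m = k then 1 else 0) with he
  set F : Fin n → Ω → ℝ := fun m ω => A m ω ^ e i k m * B m ω ^ e j l m with hF
  have hApow : ∀ (C : Fin n → Ω → ℝ), (∀ m, MemLp (C m) 2 μ) → ∀ m (a : ℕ), a ≤ 2 →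
      Integrable (fun ω => C m ω ^ a) μ := by
    intro C hC m a ha
    interval_cases a
    · simpa using integrable_const (1:ℝ)
    · simpa using (hC m).integrable one_le_two
    · simpa [pow_two] using (hC m).integrable_sq
  have hele : ∀ i k m : Fin n, e i k m ≤ 2 := by
    intro i k m; simp only [he]; split_ifs <;> omega
  have hFind : iIndepFun F μ := by
    have := hiidAB.comp (fun m (p : ℝ × ℝ) => p.1 ^ e i k m * p.2 ^ e j l m)
      (fun m => (measurable_fst.pow_const _).mul (measurable_snd.pow_const _))
    exact this
  have hFmeas : ∀ m, Measurable (F m) :=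
    fun m => ((hmA m).pow_const _).mul ((hmB m).pow_const _)
  have hFint : ∀ m, Integrable (F m) μ := by
    intro m
    have hind : IndepFun (fun ω => A m ω ^ e i k m) (fun ω => B m ω ^ e j l m) μ :=
      (hAB m).comp (φ := fun x : ℝ => x ^ e i k m) (ψ := fun x : ℝ => x ^ e j l m)
        (measurable_id.pow_const _) (measurable_id.pow_const _)
    exact hind.integrable_mul (hApow A hA2 m _ (hele i k m)) (hApow B hB2 m _ (hele j l m))
  have hProdA : ∀ (C : Fin n → Ω → ℝ) (i k : Fin n) (ω : Ω),
      ∏ m, C m ω ^ e i k m = C i ω * C k ω := by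
    intro C i k ω
    simp only [he, pow_add, Finset.prod_mul_distrib, pow_ite, pow_one, pow_zero,
      Finset.prod_ite_eq', Finset.mem_univ, if_true]
  have hProdEq : ∀ ω, A i ω * B j ω * (A k ω * B l ω) = ∏ m, F m ω := by
    intro ω
    rw [hF]
    simp only
    rw [Finset.prod_mul_distrib, hProdA A i k ω, hProdA B j l ω]
    ring
  have hFint1 : ∀ m, ∫ ω, F m ω ∂μ = (∫ ω, A m ω ^ e i k m ∂μ) * ∫ ω, B m ω ^ e j l m ∂μ := by
    intro m
    have hind : IndepFun (fun ω => A m ω ^ e i k m) (fun ω => B m ω ^ e j l m) μ :=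
      (hAB m).comp (φ := fun x : ℝ => x ^ e i k m) (ψ := fun x : ℝ => x ^ e j l m)
        (measurable_id.pow_const _) (measurable_id.pow_const _)
    exact hind.integral_fun_mul_eq_mul_integral ((hmA m).pow_const _).aestronglyMeasurable
      ((hmB m).pow_const _).aestronglyMeasurable
  have PA : ∀ (C : Fin n → Ω → ℝ), (∀ m, ∫ ω, C m ω ∂μ = 0) → ∀ (u : ℝ),
      (∀ m, ∫ ω, (C m ω)^2 ∂μ = u) → ∀ i k : Fin n,
      ∏ m, ∫ ω, C m ω ^ e i k m ∂μ = if i = k then u else 0 := by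
    intro C hEC u hEC2 i k
    by_cases hik : i = k
    · subst hik
      rw [if_pos rfl, Finset.prod_eq_single i]
      · have h2 : e i i i = 2 := by simp [he]
        rw [h2]; exact hEC2 i
      · intro m _ hmi
        have h0 : e i i m = 0 := by simp [he, hmi]
        rw [h0]; simp
      · intro h; exact absurd (Finset.mem_univ i) h
    · simp only [hik, if_false]
      apply Finset.prod_eq_zero (Finset.mem_univ i)
      have h1 : e i k i = 1 := by simp [he, hik]
      rw [h1]; simpa using hEC i
  constructor
  · have := integrable_finset_prod_of_iIndepFun hFind hFmeas hFint Finset.univ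
    apply this.congr
    filter_upwards with ω
    exact (hProdEq ω).symm
  · calc ∫ ω, A i ω * B j ω * (A k ω * B l ω) ∂μ = ∫ ω, ∏ m, F m ω ∂μ := by
          exact integral_congr_ae (Filter.Eventually.of_forall hProdEq)
      _ = ∏ m, ∫ ω, F m ω ∂μ := integral_finset_prod_of_iIndepFun hFind hFmeas _
      _ = ∏ m, ((∫ ω, A m ω ^ e i k m ∂μ) * ∫ ω, B m ω ^ e j l m ∂μ) :=
          Finset.prod_congr rfl fun m _ => hFint1 m
      _ = (∏ m, ∫ ω, A m ω ^ e i k m ∂μ) * ∏ m, ∫ ω, B m ω ^ e j l m ∂μ :=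
          Finset.prod_mul_distrib
      _ = (if i = k then v else 0) * (if j = l then w else 0) := by
          rw [PA A hEA v hEA2 i k, PA B hEB w hEB2 j l]

end Helpers

/-- For i.i.d. pairs of square-integrable random variables with independent components,
E[(∑ᵢ(Xᵢ - X̄)(Yᵢ - Ȳ))²] = (n-1)·Var(X₁)·Var(Y₁). -/
theorem expected_sq_sample_cov {Ω : Type*} [MeasurableSpace Ω] (μ : Measure Ω)
    [IsProbabilityMeasure μ] (n : ℕ) (hn : 0 < n) (X Y : Fin n → Ω → ℝ)
    (hmX : ∀ i, Measurable (X i)) (hmY : ∀ i, Measurable (Y i))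
    (hX2 : ∀ i, MemLp (X i) 2 μ) (hY2 : ∀ i, MemLp (Y i) 2 μ)
    (hiid : iIndepFun (fun i ω => (X i ω, Y i ω)) μ)
    (hident : ∀ i, IdentDistrib (fun ω => (X i ω, Y i ω)) (fun ω => (X ⟨0, hn⟩ ω, Y ⟨0, hn⟩ ω)) μ μ)
    (hXY : ∀ i, IndepFun (X i) (Y i) μ) :
    ∫ ω, (∑ i, (X i ω - (∑ j, X j ω) / n) * (Y i ω - (∑ j, Y j ω) / n)) ^ 2 ∂μ
      = (n - 1 : ℝ) * variance (X ⟨0, hn⟩) μ * variance (Y ⟨0, hn⟩) μ := by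
  classical
  have hn' : (n:ℝ) ≠ 0 := Nat.cast_ne_zero.2 hn.ne'
  set i0 : Fin n := ⟨0, hn⟩ with hi0
  set mx : ℝ := ∫ ω, X i0 ω ∂μ with hmx
  set my : ℝ := ∫ ω, Y i0 ω ∂μ with hmy
  set A : Fin n → Ω → ℝ := fun i ω => X i ω - mx with hA
  set B : Fin n → Ω → ℝ := fun i ω => Y i ω - my with hB
  set v : ℝ := variance (X i0) μ with hv
  set w : ℝ := variance (Y i0) μ with hw
  set c : Fin n × Fin n → ℝ := fun p => (if p.1 = p.2 then (1:ℝ) else 0) - 1/n with hc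
  -- measurability and integrability of A, B
  have hmA : ∀ i, Measurable (A i) := fun i => (hmX i).sub measurable_const
  have hmB : ∀ i, Measurable (B i) := fun i => (hmY i).sub measurable_const
  have hA2 : ∀ i, MemLp (A i) 2 μ := fun i => (hX2 i).sub (memLp_const mx)
  have hB2 : ∀ i, MemLp (B i) 2 μ := fun i => (hY2 i).sub (memLp_const my)
  -- identical distribution of marginals
  have hidX : ∀ i, IdentDistrib (X i) (X i0) μ μ := fun i => (hident i).comp measurable_fst
  have hidY : ∀ i, IdentDistrib (Y i) (Y i0) μ μ := fun i => (hident i).comp measurable_snd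
  -- means
  have hEA : ∀ i, ∫ ω, A i ω ∂μ = 0 := by
    intro i
    have : ∫ ω, A i ω ∂μ = (∫ ω, X i ω ∂μ) - mx := by
      rw [hA]
      simp only
      rw [integral_sub ((hX2 i).integrable one_le_two) (integrable_const mx)]
      simp
    rw [this, (hidX i).integral_eq, ← hmx, sub_self]
  have hEB : ∀ i, ∫ ω, B i ω ∂μ = 0 := by
    intro i
    have : ∫ ω, B i ω ∂μ = (∫ ω, Y i ω ∂μ) - my := by
      rw [hB]
      simp only
      rw [integral_sub ((hY2 i).integrable one_le_two) (integrable_const my)]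
      simp
    rw [this, (hidY i).integral_eq, ← hmy, sub_self]
  -- second moments
  have hEA2 : ∀ i, ∫ ω, (A i ω)^2 ∂μ = v := by
    intro i
    have h2 : IdentDistrib (fun ω => (X i ω - mx)^2) (fun ω => (X i0 ω - mx)^2) μ μ :=
      (hidX i).comp ((measurable_id.sub_const mx).pow_const 2)
    rw [hA]
    simp only
    rw [h2.integral_eq, hv, variance_eq_integral (hX2 i0).aemeasurable]
  have hEB2 : ∀ i, ∫ ω, (B i ω)^2 ∂μ = w := by
    intro i
    have h2 : IdentDistrib (fun ω => (Y i ω - my)^2) (fun ω => (Y i0 ω - my)^2) μ μ :=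
      (hidY i).comp ((measurable_id.sub_const my).pow_const 2)
    rw [hB]
    simp only
    rw [h2.integral_eq, hw, variance_eq_integral (hY2 i0).aemeasurable]
  -- independence
  have hiidAB : iIndepFun (fun m ω => (A m ω, B m ω)) μ := by
    have := hiid.comp (fun m (p : ℝ × ℝ) => (p.1 - mx, p.2 - my))
      (fun m => ((measurable_fst.sub_const mx).prodMk (measurable_snd.sub_const my)))
    exact this
  have hAB : ∀ m, IndepFun (A m) (B m) μ :=
    fun m => (hXY m).comp (measurable_id.sub_const mx) (measurable_id.sub_const my)
  have key := fun i j k l =>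
    key_moment (μ := μ) hmA hmB hA2 hB2 hiidAB hAB hEA hEB hEA2 hEB2 i j k l
  -- rewrite integrand
  have hint_eq : ∀ ω, (∑ i, (X i ω - (∑ j, X j ω) / n) * (Y i ω - (∑ j, Y j ω) / n)) ^ 2
      = ∑ p : Fin n × Fin n, ∑ q : Fin n × Fin n,
          (c p * c q) * (A p.1 ω * B p.2 ω * (A q.1 ω * B q.2 ω)) := by
    intro ω
    have h1 : (∑ i, (X i ω - (∑ j, X j ω) / n) * (Y i ω - (∑ j, Y j ω) / n))
        = ∑ p : Fin n × Fin n, c p * (A p.1 ω * B p.2 ω) := by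
      rw [Finset.sum_congr rfl fun i _ => by
        rw [center_eq (fun j => X j ω) mx hn' i, center_eq (fun j => Y j ω) my hn' i]]
      exact expand_eq (fun i => A i ω) (fun i => B i ω) hn'
    rw [h1, pow_two, Finset.sum_mul_sum]
    exact Finset.sum_congr rfl fun p _ => Finset.sum_congr rfl fun q _ => by ring
  rw [integral_congr_ae (Filter.Eventually.of_forall hint_eq)]
  rw [integral_finset_sum _ fun p _ => integrable_finset_sum _ fun q _ =>
    ((key p.1 p.2 q.1 q.2).1.const_mul (c p * c q))]
  have hsum : ∀ p : Fin n × Fin n,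
      ∑ q : Fin n × Fin n, ∫ ω, (c p * c q) * (A p.1 ω * B p.2 ω * (A q.1 ω * B q.2 ω)) ∂μ
        = c p ^ 2 * (v * w) := by
    intro p
    have : ∀ q : Fin n × Fin n,
        ∫ ω, (c p * c q) * (A p.1 ω * B p.2 ω * (A q.1 ω * B q.2 ω)) ∂μ
          = if p = q then c p * c q * (v * w) else 0 := by
      intro q
      rw [integral_const_mul _ _, (key p.1 p.2 q.1 q.2).2]
      by_cases h1 : p.1 = q.1 <;> by_cases h2 : p.2 = q.2 <;>
        simp [Prod.ext_iff, h1, h2] <;> ring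
    rw [Finset.sum_congr rfl fun q _ => this q, Finset.sum_ite_eq]
    simp [pow_two]
  rw [Finset.sum_congr rfl fun p _ => by
    rw [show (∫ ω, ∑ q : Fin n × Fin n,
        (c p * c q) * (A p.1 ω * B p.2 ω * (A q.1 ω * B q.2 ω)) ∂μ)
      = ∑ q : Fin n × Fin n, ∫ ω, (c p * c q) * (A p.1 ω * B p.2 ω * (A q.1 ω * B q.2 ω)) ∂μ
      from integral_finset_sum _ fun q _ => ((key p.1 p.2 q.1 q.2).1.const_mul (c p * c q)),
      hsum p]]
  rw [← Finset.sum_mul, hc]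
  simp only
  rw [csum n hn]
  ring
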